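/- Fix λ > 0, d₁ > 0, d₂ > 0, a > 0, w_o > 0 and angles θ_i, θ_r with sin θ_i > 0 and sin θ_r > 0. Define for Σ > 0 the functions G₁(Σ) = 4π · (4π Σ² sin θ_r sin θ_i / λ⁴) · g_LS · g_PD and G₂(Σ) = (4π Σ sin θ_i / λ²) · g_LS, where g_LS = 2π w_o²/(4π d₁²) and g_PD = π a²/(4π d₂²). Then for every Σ > 0, G₁(Σ) ≤ G₂(Σ) if and only if Σ ≤ S₁ := λ² d₂²/(π a² sin θ_r), with equality G₁(Σ) = G₂(Σ) if and only if Σ = S₁. -/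

import Mathlib

open Real

/-- Proposition 1, first boundary: with `G₁(Σ) = 4π (4π Σ² sin θr sin θi / λ⁴) g_LS g_PD`
and `G₂(Σ) = (4π Σ sin θi / λ²) g_LS`, one has `G₁(Σ) ≤ G₂(Σ)` iff
`Σ ≤ S₁ = λ² d₂²/(π a² sin θr)`, with equality iff `Σ = S₁`. -/
theorem boundary_S1 (lam d₁ d₂ a w_o θi θr : ℝ)
    (hlam : 0 < lam) (hd₁ : 0 < d₁) (hd₂ : 0 < d₂) (ha : 0 < a) (hwo : 0 < w_o)
    (hθi : 0 < Real.sin θi) (hθr : 0 < Real.sin θr)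
    (g_LS g_PD S₁ : ℝ) (G₁ G₂ : ℝ → ℝ)
    (hgLS : g_LS = 2 * π * w_o ^ 2 / (4 * π * d₁ ^ 2))
    (hgPD : g_PD = π * a ^ 2 / (4 * π * d₂ ^ 2))
    (hG₁ : ∀ Sig, G₁ Sig =
      4 * π * (4 * π * Sig ^ 2 * Real.sin θr * Real.sin θi / lam ^ 4) * g_LS * g_PD)
    (hG₂ : ∀ Sig, G₂ Sig = 4 * π * Sig * Real.sin θi / lam ^ 2 * g_LS)
    (hS₁ : S₁ = lam ^ 2 * d₂ ^ 2 / (π * a ^ 2 * Real.sin θr)) :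
    ∀ Sig : ℝ, 0 < Sig →
      (G₁ Sig ≤ G₂ Sig ↔ Sig ≤ S₁) ∧ (G₁ Sig = G₂ Sig ↔ Sig = S₁) := by
  intro Sig hSig
  have hπ : (0:ℝ) < π := Real.pi_pos
  have hgLSpos : 0 < g_LS := by rw [hgLS]; positivity
  have hS₁pos : 0 < S₁ := by rw [hS₁]; positivity
  set c : ℝ := 4 * π * Real.sin θi / lam ^ 2 * g_LS / S₁ * Sig with hc_def
  have hc : 0 < c := by
    apply mul_pos _ hSig
    apply div_pos _ hS₁pos
    apply mul_pos _ hgLSpos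
    positivity
  have key : G₂ Sig - G₁ Sig = c * (S₁ - Sig) := by
    rw [hG₁, hG₂, hc_def, hS₁, hgPD]
    field_simp
  constructor
  · rw [← sub_nonneg, key, ← sub_nonneg (b := Sig)]
    exact mul_nonneg_iff_of_pos_left hc
  · constructor
    · intro h
      have h0 : c * (S₁ - Sig) = 0 := by rw [← key, h, sub_self]
      rcases mul_eq_zero.mp h0 with h1 | h1
      · exact absurd h1 hc.ne'
      · linarith
    · intro h
      have : c * (S₁ - Sig) = 0 := by rw [h, sub_self, mul_zero]
      linarith [key, this]
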